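/- Fix reals λ₁ > ... > λ_r > 0 and x ∈ (0, ∑_i λ_i²]. For every vector p with 0 ≤ p_i < 1 and ∑_{i=1}^r λ_i² p_i = x, one has ∑_{i=1}^r log(1 - p_i) ≤ J_Λ(x), where J_Λ(x) = log( [ (∑_{i=1}^{s} λ_i² - x)/s ]^{s} / ∏_{i=1}^{s} λ_i² ) and s = s(x) is the index k with x ∈ I_k. -/

import Mathlib

open Finset

private lemma log_tangent {a b : ℝ} (ha : 0 < a) (hb : 0 < b) :
    Real.log b ≤ Real.log a + (b - a) / a := by
  have h := Real.log_le_sub_one_of_pos (div_pos hb ha)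
  rw [Real.log_div hb.ne' ha.ne'] at h
  have : b / a - 1 = (b - a) / a := by field_simp
  linarith [this ▸ h]

/-- Water-filling optimum: every feasible `p` (with `0 ≤ pᵢ < 1`, `∑ λᵢ² pᵢ = x`) satisfies
`∑ log(1 - pᵢ) ≤ J_Λ(x)`, where `s` (0-indexed) is the index with `x ∈ I_s` and
`J_Λ(x) = log( [ (∑_{i ≤ s} λᵢ² - x)/(s+1) ]^(s+1) / ∏_{i ≤ s} λᵢ² )`. -/
theorem stmt8 (r s : ℕ) (lam : ℕ → ℝ)
    (hpos : ∀ i, i < r → 0 < lam i)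
    (hdec : ∀ i j, i < j → j < r → lam j < lam i)
    (hzero : ∀ i, r ≤ i → lam i = 0)
    (x : ℝ) (hx : 0 < x) (hxle : x ≤ ∑ i ∈ range r, lam i ^ 2)
    (hs : s < r)
    (hx1 : ∑ i ∈ range (s + 1), (lam i ^ 2 - lam s ^ 2) < x)
    (hx2 : x ≤ ∑ i ∈ range (s + 2), (lam i ^ 2 - lam (s + 1) ^ 2))
    (p : ℕ → ℝ)
    (hp : ∀ i, i < r → 0 ≤ p i ∧ p i < 1)
    (hfeas : ∑ i ∈ range r, lam i ^ 2 * p i = x) :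
    ∑ i ∈ range r, Real.log (1 - p i) ≤
      Real.log ((((∑ j ∈ range (s + 1), lam j ^ 2 - x) / (s + 1 : ℝ)) ^ (s + 1)) /
        ∏ j ∈ range (s + 1), lam j ^ 2) := by
  set c : ℝ := ∑ j ∈ range (s + 1), lam j ^ 2 - x with hcdef
  set μ : ℝ := c / (s + 1 : ℝ) with hμdef
  have hsr1 : (0 : ℝ) < (s + 1 : ℝ) := by positivity
  -- c ≥ (s+1) * lam (s+1) ^ 2
  have hc_ge : (s + 1 : ℝ) * lam (s + 1) ^ 2 ≤ c := by
    have h1 : ∑ i ∈ range (s + 2), (lam i ^ 2 - lam (s + 1) ^ 2)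
        = ∑ i ∈ range (s + 2), lam i ^ 2 - (s + 2 : ℝ) * lam (s + 1) ^ 2 := by
      rw [Finset.sum_sub_distrib, Finset.sum_const, card_range]
      push_cast; ring
    have h2 : ∑ i ∈ range (s + 2), lam i ^ 2
        = ∑ i ∈ range (s + 1), lam i ^ 2 + lam (s + 1) ^ 2 := by
      rw [Finset.sum_range_succ]
    rw [h1, h2] at hx2
    push_cast at hx2 ⊢
    nlinarith
  have hμnn : 0 ≤ μ := by
    have : (0 : ℝ) ≤ (s + 1 : ℝ) * lam (s + 1) ^ 2 := by positivity
    exact div_nonneg (by linarith) hsr1.le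
  have h1p : ∀ i, i < r → 0 < 1 - p i := fun i hi => by linarith [(hp i hi).2]
  rcases eq_or_lt_of_le hμnn with hμ0 | hμ
  · -- degenerate case μ = 0
    have hc0 : c = 0 := by
      have := hμ0.symm
      rw [hμdef, div_eq_zero_iff] at this
      rcases this with h | h
      · exact h
      · exact absurd h (by positivity)
    rw [← hμ0, zero_pow (by omega : s + 1 ≠ 0), zero_div, Real.log_zero]
    apply Finset.sum_nonpos
    intro i hi
    rw [mem_range] at hi
    exact Real.log_nonpos (by linarith [h1p i hi]) (by linarith [(hp i hi).1])
  · -- main case μ > 0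
    have hlamsq : ∀ i, i < r → (0 : ℝ) < lam i ^ 2 := fun i hi => by
      have := hpos i hi; positivity
    have hlam_le_μ : ∀ i, s + 1 ≤ i → i < r → lam i ^ 2 ≤ μ := by
      intro i hi1 hi2
      have hs1r : s + 1 < r ∨ s + 1 = i := by omega
      have hsp : 0 < lam (s + 1) := hpos (s + 1) (by omega)
      have h1 : lam i ≤ lam (s + 1) := by
        rcases eq_or_lt_of_le hi1 with h | h
        · rw [← h]
        · exact (hdec (s + 1) i h hi2).le
      have h2 : lam i ^ 2 ≤ lam (s + 1) ^ 2 := by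
        have := (hpos i hi2).le
        nlinarith
      have h3 : lam (s + 1) ^ 2 ≤ μ := by
        rw [hμdef, le_div_iff₀ hsr1]
        nlinarith
      linarith
    -- the majorizing function
    set g : ℕ → ℝ := fun i =>
      if i < s + 1 then
        Real.log (μ / lam i ^ 2) + ((1 - p i) - μ / lam i ^ 2) * (lam i ^ 2 / μ)
      else -p i with hgdef
    have step1 : ∑ i ∈ range r, Real.log (1 - p i) ≤ ∑ i ∈ range r, g i := by
      apply Finset.sum_le_sum
      intro i hi
      rw [mem_range] at hi
      by_cases hcase : i < s + 1
      · simp only [hgdef, if_pos hcase]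
        have ha : 0 < μ / lam i ^ 2 := div_pos hμ (hlamsq i hi)
        have := log_tangent ha (h1p i hi)
        have heq : ((1 - p i) - μ / lam i ^ 2) * (lam i ^ 2 / μ)
            = ((1 - p i) - μ / lam i ^ 2) / (μ / lam i ^ 2) := by
          have hμne := hμ.ne'
          have hlne := (hlamsq i hi).ne'
          field_simp
        rw [heq]
        exact this
      · simp only [hgdef, if_neg hcase]
        have := Real.log_le_sub_one_of_pos (h1p i hi)
        linarith
    apply le_trans step1
    -- split the sum
    rw [← Finset.sum_range_add_sum_Ico g (by omega : s + 1 ≤ r)]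
    have hgA : ∑ i ∈ range (s + 1), g i
        = ∑ i ∈ range (s + 1), Real.log (μ / lam i ^ 2)
          + ∑ i ∈ range (s + 1), ((1 - p i) - μ / lam i ^ 2) * (lam i ^ 2 / μ) := by
      rw [← Finset.sum_add_distrib]
      apply Finset.sum_congr rfl
      intro i hi
      rw [mem_range] at hi
      simp only [hgdef, if_pos hi]
    have hgB : ∑ i ∈ Ico (s + 1) r, g i = ∑ i ∈ Ico (s + 1) r, (-p i) := by
      apply Finset.sum_congr rfl
      intro i hi
      rw [mem_Ico] at hi
      simp only [hgdef, if_neg (by omega : ¬ i < s + 1)]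
    rw [hgA, hgB]
    -- A equals the RHS
    have hA : ∑ i ∈ range (s + 1), Real.log (μ / lam i ^ 2)
        = Real.log ((μ ^ (s + 1)) / ∏ j ∈ range (s + 1), lam j ^ 2) := by
      have hprodpos : (0 : ℝ) < ∏ j ∈ range (s + 1), lam j ^ 2 :=
        Finset.prod_pos fun j hj => hlamsq j (by rw [mem_range] at hj; omega)
      rw [Real.log_div (by positivity) hprodpos.ne', Real.log_pow,
        Real.log_prod (fun j hj => (hlamsq j (by rw [mem_range] at hj; omega)).ne')]
      have hsum : ∑ i ∈ range (s + 1), Real.log (μ / lam i ^ 2)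
          = ∑ i ∈ range (s + 1), (Real.log μ - Real.log (lam i ^ 2)) := by
        apply Finset.sum_congr rfl
        intro i hi
        rw [mem_range] at hi
        rw [Real.log_div hμ.ne' (hlamsq i (by omega)).ne']
      rw [hsum, Finset.sum_sub_distrib, Finset.sum_const, card_range, nsmul_eq_mul]
    -- the slack term T ≤ 0
    have hsplit : ∑ i ∈ range (s + 1), lam i ^ 2 * p i
        + ∑ i ∈ Ico (s + 1) r, lam i ^ 2 * p i = x := by
      rw [Finset.sum_range_add_sum_Ico _ (by omega : s + 1 ≤ r)]
      exact hfeas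
    have hT1 : ∑ i ∈ range (s + 1), ((1 - p i) - μ / lam i ^ 2) * (lam i ^ 2 / μ)
        = (∑ i ∈ range (s + 1), (lam i ^ 2 - lam i ^ 2 * p i - μ)) / μ := by
      rw [Finset.sum_div]
      apply Finset.sum_congr rfl
      intro i hi
      rw [mem_range] at hi
      have h1 := (hlamsq i (by omega)).ne'
      field_simp
      rw [mul_sub, mul_div_assoc', mul_div_right_comm, div_self h1, one_mul]
      ring
    have hT2 : ∑ i ∈ range (s + 1), (lam i ^ 2 - lam i ^ 2 * p i - μ)
        = ∑ i ∈ Ico (s + 1) r, lam i ^ 2 * p i := by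
      have hsum : ∑ i ∈ range (s + 1), (lam i ^ 2 - lam i ^ 2 * p i - μ)
          = ∑ i ∈ range (s + 1), lam i ^ 2 - ∑ i ∈ range (s + 1), lam i ^ 2 * p i
            - (s + 1 : ℝ) * μ := by
        rw [show (fun i => lam i ^ 2 - lam i ^ 2 * p i - μ)
            = (fun i => (lam i ^ 2 - lam i ^ 2 * p i) - μ) from rfl]
        rw [Finset.sum_sub_distrib, Finset.sum_sub_distrib, Finset.sum_const, card_range]
        push_cast; ring
      have hμc : (s + 1 : ℝ) * μ = c := by
        rw [hμdef]; field_simp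
      rw [hsum, hμc, hcdef]
      linarith [hsplit]
    have hT : (∑ i ∈ range (s + 1), ((1 - p i) - μ / lam i ^ 2) * (lam i ^ 2 / μ))
        + ∑ i ∈ Ico (s + 1) r, (-p i) ≤ 0 := by
      rw [hT1, hT2]
      have hterm : ∑ i ∈ Ico (s + 1) r, lam i ^ 2 * p i
          ≤ ∑ i ∈ Ico (s + 1) r, μ * p i := by
        apply Finset.sum_le_sum
        intro i hi
        rw [mem_Ico] at hi
        have := (hp i hi.2).1
        have := hlam_le_μ i hi.1 hi.2
        nlinarith
      have h2 : ∑ i ∈ Ico (s + 1) r, μ * p i = μ * ∑ i ∈ Ico (s + 1) r, p i := by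
        rw [Finset.mul_sum]
      have h3 : ∑ i ∈ Ico (s + 1) r, (-p i) = -∑ i ∈ Ico (s + 1) r, p i := by
        rw [Finset.sum_neg_distrib]
      rw [h3]
      have h4 : (∑ i ∈ Ico (s + 1) r, lam i ^ 2 * p i) / μ
          ≤ ∑ i ∈ Ico (s + 1) r, p i := by
        rw [div_le_iff₀ hμ]
        rw [h2, mul_comm] at hterm
        linarith
      linarith
    rw [hA]
    linarith [hT]
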